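/- (Linear size of the compressed quadtree.) For every finite set P ⊆ U with |P| = n ≥ 1, the number of canonical squares that are critical for P is at most n − 1, and the total number of tiles of QT(P) is at most 4n. -/

import Mathlib

/-- The unit square `U = [0,1) × [0,1)`. -/
def unitSq : Set (ℝ × ℝ) := Set.Ico (0 : ℝ) 1 ×ˢ Set.Ico (0 : ℝ) 1

/-- The square `[i/2^k, (i+1)/2^k) × [j/2^k, (j+1)/2^k)`. -/
def canSq (k : ℕ) (i j : ℤ) : Set (ℝ × ℝ) :=
  Set.Ico ((i : ℝ) / 2 ^ k) (((i : ℝ) + 1) / 2 ^ k) ×ˢ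
    Set.Ico ((j : ℝ) / 2 ^ k) (((j : ℝ) + 1) / 2 ^ k)

/-- `σ` is a canonical square of side length `2⁻ᵏ`: it has the form
`[i/2^k, (i+1)/2^k) × [j/2^k, (j+1)/2^k)` with `0 ≤ i, j < 2^k`
(so it is contained in the unit square). -/
def IsCanSqSide (k : ℕ) (σ : Set (ℝ × ℝ)) : Prop :=
  ∃ i j : ℤ, 0 ≤ i ∧ i < 2 ^ k ∧ 0 ≤ j ∧ j < 2 ^ k ∧ σ = canSq k i j

/-- `σ` is a canonical square. -/
def IsCanSq (σ : Set (ℝ × ℝ)) : Prop := ∃ k : ℕ, IsCanSqSide k σ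

/-- `q` is one of the four quadrants of the canonical square `σ`: if `σ` has side
length `2⁻ᵏ`, the quadrants are the canonical squares of side length `2⁻⁽ᵏ⁺¹⁾`
contained in `σ`. -/
def IsQuadrantOf (q σ : Set (ℝ × ℝ)) : Prop :=
  ∃ k : ℕ, IsCanSqSide k σ ∧ IsCanSqSide (k + 1) q ∧ q ⊆ σ

/-- `σ` is the smallest canonical square containing `S`: it is a canonical square,
it contains `S`, and it is contained in every canonical square containing `S`. -/
def IsSmallestCanSq (S σ : Set (ℝ × ℝ)) : Prop :=
  IsCanSq σ ∧ S ⊆ σ ∧ ∀ τ : Set (ℝ × ℝ), IsCanSq τ → S ⊆ τ → σ ⊆ τ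

open scoped Classical

/-- `smallestCanSq S`: the smallest canonical square containing `S` (junk value `∅` if none exists). -/
noncomputable def smallestCanSq (S : Set (ℝ × ℝ)) : Set (ℝ × ℝ) :=
  if h : ∃ σ : Set (ℝ × ℝ), IsSmallestCanSq S σ then h.choose else ∅

/-- A canonical square `σ` is critical for `P` if at least two of its four
quadrants contain a point of `P`. -/
def Critical (P σ : Set (ℝ × ℝ)) : Prop :=
  IsCanSq σ ∧ ∃ q₁ q₂ : Set (ℝ × ℝ), IsQuadrantOf q₁ σ ∧ IsQuadrantOf q₂ σ ∧
    q₁ ≠ q₂ ∧ (P ∩ q₁).Nonempty ∧ (P ∩ q₂).Nonempty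

/-- The tiles of the compressed quadtree map `QT(P)`: (i) `U` itself if `|P| ≤ 1`;
(ii) the annulus `U \ sq(P)` if `|P| ≥ 2` and `sq(P) ≠ U`; (iii) for every
canonical square `σ` critical for `P` and every quadrant `q` of `σ`: the square
`q` if `|P ∩ q| ≤ 1`, and the annulus `q \ sq(P ∩ q)` if `|P ∩ q| ≥ 2` and
`sq(P ∩ q) ≠ q`. -/
noncomputable def QT (P : Set (ℝ × ℝ)) : Set (Set (ℝ × ℝ)) :=
  {f | (P.ncard ≤ 1 ∧ f = unitSq)
    ∨ (2 ≤ P.ncard ∧ smallestCanSq P ≠ unitSq ∧ f = unitSq \ smallestCanSq P)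
    ∨ (∃ σ q : Set (ℝ × ℝ), Critical P σ ∧ IsQuadrantOf q σ ∧
        (((P ∩ q).ncard ≤ 1 ∧ f = q)
          ∨ (2 ≤ (P ∩ q).ncard ∧ smallestCanSq (P ∩ q) ≠ q ∧ f = q \ smallestCanSq (P ∩ q))))}



def dI (k : ℕ) (i : ℤ) : Set ℝ := Set.Ico ((i : ℝ) / 2 ^ k) (((i : ℝ) + 1) / 2 ^ k)

lemma dI_lt (k : ℕ) (i : ℤ) : (i : ℝ) / 2 ^ k < ((i : ℝ) + 1) / 2 ^ k := by
  have h : (0:ℝ) < 2 ^ k := by positivity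
  rw [div_lt_div_iff_of_pos_right h]; linarith

lemma dI_nonempty (k : ℕ) (i : ℤ) : (dI k i).Nonempty :=
  Set.nonempty_Ico.mpr (dI_lt k i)

lemma bridgeLe {l k : ℕ} (h : l ≤ k) (a i : ℤ) :
    (a : ℝ) / 2 ^ l ≤ (i : ℝ) / 2 ^ k ↔ a * 2 ^ (k - l) ≤ i := by
  rw [div_le_div_iff₀ (by positivity) (by positivity)]
  have h2 : (2 : ℝ) ^ k = 2 ^ (k - l) * 2 ^ l := by
    rw [← pow_add]; congr 1; omega
  rw [h2, ← mul_assoc, mul_le_mul_iff_of_pos_right (by positivity : (0:ℝ) < 2 ^ l)]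
  exact_mod_cast Iff.rfl

lemma bridgeLt {l k : ℕ} (h : l ≤ k) (a i : ℤ) :
    (a : ℝ) / 2 ^ l < (i : ℝ) / 2 ^ k ↔ a * 2 ^ (k - l) < i := by
  rw [div_lt_div_iff₀ (by positivity) (by positivity)]
  have h2 : (2 : ℝ) ^ k = 2 ^ (k - l) * 2 ^ l := by
    rw [← pow_add]; congr 1; omega
  rw [h2, ← mul_assoc, mul_lt_mul_iff_of_pos_right (by positivity : (0:ℝ) < 2 ^ l)]
  exact_mod_cast Iff.rfl

lemma dI_subset_iff {l k : ℕ} (h : l ≤ k) (i a : ℤ) :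
    dI k i ⊆ dI l a ↔ a * 2 ^ (k - l) ≤ i ∧ i + 1 ≤ (a + 1) * 2 ^ (k - l) := by
  rw [dI, dI, Set.Ico_subset_Ico_iff (dI_lt k i)]
  constructor
  · rintro ⟨h1, h2⟩
    refine ⟨(bridgeLe h a i).mp h1, ?_⟩
    by_contra hc
    push_neg at hc
    have := (bridgeLt h (a+1) (i+1)).mpr hc
    push_cast at this
    linarith
  · rintro ⟨h1, h2⟩
    refine ⟨(bridgeLe h a i).mpr h1, ?_⟩
    by_contra hc
    push_neg at hc
    have h3 : ((a:ℝ)+1) / 2^l < ((i:ℝ)+1) / 2^k := hc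
    have h4 : (((a+1:ℤ)):ℝ) / 2^l < (((i+1:ℤ)):ℝ) / 2^k := by push_cast; exact h3
    have := (bridgeLt h (a+1) (i+1)).mp h4
    omega

lemma dI_subset_of_mem_mem {l k : ℕ} (h : l ≤ k) {i a : ℤ} {x : ℝ}
    (hx : x ∈ dI k i) (hy : x ∈ dI l a) : dI k i ⊆ dI l a := by
  obtain ⟨hx1, hx2⟩ := hx
  obtain ⟨hy1, hy2⟩ := hy
  rw [dI_subset_iff h]
  constructor
  · have h3 : ((a:ℤ):ℝ) / 2^l < (((i+1:ℤ)):ℝ) / 2^k := by push_cast; linarith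
    have := (bridgeLt h a (i+1)).mp h3
    omega
  · have h3 : ((i:ℤ):ℝ) / 2^k < (((a+1:ℤ)):ℝ) / 2^l := by push_cast; linarith
    by_contra hc
    push_neg at hc
    have h4 : (((a+1:ℤ)):ℝ) / 2^l ≤ ((i:ℤ):ℝ) / 2^k :=
      (bridgeLe h (a+1) i).mpr (by omega)
    linarith

lemma dI_eq_iff {k l : ℕ} {i a : ℤ} (h : dI k i = dI l a) : k = l ∧ i = a := by
  rw [dI, dI, Set.Ico_eq_Ico_iff (Or.inl (dI_lt k i))] at h
  obtain ⟨h1, h2⟩ := h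
  have hk2 : (2:ℝ) ^ k = 2 ^ l := by
    have p1 : (0:ℝ) < 2 ^ k := by positivity
    have p2 : (0:ℝ) < 2 ^ l := by positivity
    field_simp at h1 h2
    nlinarith [h1, h2]
  have hk : k = l := pow_right_injective₀ (by norm_num : (0:ℝ) < 2) (by norm_num) hk2
  subst hk
  refine ⟨rfl, ?_⟩
  field_simp at h1
  exact_mod_cast h1

lemma canSq_eq (k : ℕ) (i j : ℤ) : canSq k i j = dI k i ×ˢ dI k j := rfl

lemma canSq_nonempty (k : ℕ) (i j : ℤ) : (canSq k i j).Nonempty :=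
  (dI_nonempty k i).prod (dI_nonempty k j)

lemma canSq_inj {k l : ℕ} {i j a b : ℤ} (h : canSq k i j = canSq l a b) :
    k = l ∧ i = a ∧ j = b := by
  rw [canSq_eq, canSq_eq,
    Set.prod_eq_prod_iff_of_nonempty ((dI_nonempty k i).prod (dI_nonempty k j))] at h
  obtain ⟨h1, h2⟩ := h
  obtain ⟨hk, hi⟩ := dI_eq_iff h1
  obtain ⟨-, hj⟩ := dI_eq_iff h2
  exact ⟨hk, hi, hj⟩

lemma canSq_subset_iff {l k : ℕ} {i j a b : ℤ} :
    canSq k i j ⊆ canSq l a b ↔ dI k i ⊆ dI l a ∧ dI k j ⊆ dI l b := by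
  rw [canSq_eq, canSq_eq, Set.prod_subset_prod_iff]
  constructor
  · rintro (h | h | h)
    · exact h
    · exact absurd h (dI_nonempty k i).ne_empty
    · exact absurd h (dI_nonempty k j).ne_empty
  · exact Or.inl

lemma mem_canSq {k : ℕ} {i j : ℤ} {p : ℝ × ℝ} :
    p ∈ canSq k i j ↔ p.1 ∈ dI k i ∧ p.2 ∈ dI k j := Set.mem_prod

lemma canSq_subset_of_mem_mem {l k : ℕ} (h : l ≤ k) {i j a b : ℤ} {p : ℝ × ℝ}
    (hp : p ∈ canSq k i j) (hq : p ∈ canSq l a b) : canSq k i j ⊆ canSq l a b := by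
  rw [mem_canSq] at hp hq
  exact canSq_subset_iff.mpr
    ⟨dI_subset_of_mem_mem h hp.1 hq.1, dI_subset_of_mem_mem h hp.2 hq.2⟩

lemma quadrant_iff {k : ℕ} {i j : ℤ} (hi : 0 ≤ i) (hik : i < 2 ^ k)
    (hj : 0 ≤ j) (hjk : j < 2 ^ k) {q : Set (ℝ × ℝ)} :
    IsQuadrantOf q (canSq k i j) ↔
      ∃ a b : ℤ, (a = 2 * i ∨ a = 2 * i + 1) ∧ (b = 2 * j ∨ b = 2 * j + 1) ∧
        q = canSq (k + 1) a b := by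
  have hpow : (2 : ℤ) ^ (k + 1) = 2 * 2 ^ k := by rw [pow_succ]; ring
  constructor
  · rintro ⟨k', ⟨i', j', _, _, _, _, hσ⟩, ⟨a, b, _, _, _, _, hq⟩, hsub⟩
    obtain ⟨rfl, rfl, rfl⟩ := canSq_inj hσ
    subst hq
    obtain ⟨h1, h2⟩ := canSq_subset_iff.mp hsub
    rw [dI_subset_iff (Nat.le_succ k)] at h1 h2
    have e : k + 1 - k = 1 := by omega
    rw [e, pow_one] at h1 h2
    exact ⟨a, b, by omega, by omega, rfl⟩
  · rintro ⟨a, b, ha, hb, rfl⟩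
    refine ⟨k, ⟨i, j, hi, hik, hj, hjk, rfl⟩, ⟨a, b, by omega, by omega, by omega, by omega, rfl⟩, ?_⟩
    rw [canSq_subset_iff, dI_subset_iff (Nat.le_succ k), dI_subset_iff (Nat.le_succ k)]
    have e : k + 1 - k = 1 := by omega
    rw [e, pow_one]
    omega

lemma quadrant_unique {σ q₁ q₂ : Set (ℝ × ℝ)} (h1 : IsQuadrantOf q₁ σ)
    (h2 : IsQuadrantOf q₂ σ) {p : ℝ × ℝ} (hp1 : p ∈ q₁) (hp2 : p ∈ q₂) : q₁ = q₂ := by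
  obtain ⟨k, hσ, ⟨a, b, _, _, _, _, rfl⟩, -⟩ := h1
  obtain ⟨k', hσ', ⟨a', b', _, _, _, _, rfl⟩, -⟩ := h2
  obtain ⟨i, j, _, _, _, _, rfl⟩ := hσ
  obtain ⟨i', j', _, _, _, _, hσ'⟩ := hσ'
  obtain ⟨rfl, -, -⟩ := canSq_inj hσ'
  exact subset_antisymm (canSq_subset_of_mem_mem le_rfl hp1 hp2)
    (canSq_subset_of_mem_mem le_rfl hp2 hp1)

lemma dI_quad {k : ℕ} {i : ℤ} {x : ℝ} (hx : x ∈ dI k i) :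
    ∃ a : ℤ, 2 * i ≤ a ∧ a ≤ 2 * i + 1 ∧ x ∈ dI (k + 1) a ∧ dI (k + 1) a ⊆ dI k i := by
  set a : ℤ := ⌊x * 2 ^ (k + 1)⌋ with ha
  have hpos : (0 : ℝ) < 2 ^ (k + 1) := by positivity
  have hmem : x ∈ dI (k + 1) a := by
    constructor
    · rw [div_le_iff₀ hpos]
      exact Int.floor_le _
    · rw [lt_div_iff₀ hpos]
      have := Int.lt_floor_add_one (x * 2 ^ (k + 1))
      push_cast
      linarith
  have hsub : dI (k + 1) a ⊆ dI k i := dI_subset_of_mem_mem (Nat.le_succ k) hmem hx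
  rw [dI_subset_iff (Nat.le_succ k)] at hsub
  have e : k + 1 - k = 1 := by omega
  rw [e, pow_one] at hsub
  refine ⟨a, by omega, by omega, hmem, dI_subset_of_mem_mem (Nat.le_succ k) hmem hx⟩

lemma exists_quadrant_mem {σ : Set (ℝ × ℝ)} (hσ : IsCanSq σ) {p : ℝ × ℝ} (hp : p ∈ σ) :
    ∃ q, IsQuadrantOf q σ ∧ p ∈ q := by
  obtain ⟨k, i, j, hi, hik, hj, hjk, rfl⟩ := hσ
  rw [mem_canSq] at hp
  obtain ⟨a, ha1, ha2, hax, -⟩ := dI_quad hp.1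
  obtain ⟨b, hb1, hb2, hbx, -⟩ := dI_quad hp.2
  refine ⟨canSq (k + 1) a b, ?_, mem_canSq.mpr ⟨hax, hbx⟩⟩
  rw [quadrant_iff hi hik hj hjk]
  exact ⟨a, b, by omega, by omega, rfl⟩

lemma level_lt_of_ssubset {k k' : ℕ} {i j i' j' : ℤ}
    (hsub : canSq k' i' j' ⊆ canSq k i j) (hne : canSq k' i' j' ≠ canSq k i j) :
    k + 1 ≤ k' := by
  by_contra hc
  push_neg at hc
  have hk : k' ≤ k := by omega
  have hp : ((i' : ℝ) / 2 ^ k', (j' : ℝ) / 2 ^ k') ∈ canSq k' i' j' :=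
    mem_canSq.mpr ⟨⟨le_refl _, dI_lt k' i'⟩, ⟨le_refl _, dI_lt k' j'⟩⟩
  have hp2 := hsub hp
  have := canSq_subset_of_mem_mem hk hp2 hp
  exact hne (subset_antisymm hsub this)

lemma subsquare_in_quadrant {σ' σ : Set (ℝ × ℝ)} (hσ' : IsCanSq σ') (hσ : IsCanSq σ)
    (hsub : σ' ⊆ σ) (hne : σ' ≠ σ) : ∃ q, IsQuadrantOf q σ ∧ σ' ⊆ q := by
  obtain ⟨k', i', j', _, _, _, _, rfl⟩ := hσ'
  obtain ⟨k, i, j, hi, hik, hj, hjk, rfl⟩ := hσ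
  have hk : k + 1 ≤ k' := level_lt_of_ssubset hsub hne
  have hp : ((i' : ℝ) / 2 ^ k', (j' : ℝ) / 2 ^ k') ∈ canSq k' i' j' :=
    mem_canSq.mpr ⟨⟨le_refl _, dI_lt k' i'⟩, ⟨le_refl _, dI_lt k' j'⟩⟩
  obtain ⟨q, hq, hpq⟩ := exists_quadrant_mem ⟨k, i, j, hi, hik, hj, hjk, rfl⟩ (hsub hp)
  refine ⟨q, hq, ?_⟩
  obtain ⟨kk, hσ2, ⟨a, b, _, _, _, _, rfl⟩, -⟩ := hq
  obtain ⟨ii, jj, _, _, _, _, h2⟩ := hσ2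
  obtain ⟨rfl, -, -⟩ := canSq_inj h2
  exact canSq_subset_of_mem_mem hk hp hpq

noncomputable def lmax (S : Set (ℝ × ℝ)) : ℝ × ℝ :=
  if h : ∃ m ∈ S, ∀ x ∈ S, toLex x ≤ toLex m then h.choose else (0, 0)

lemma lmax_spec {S : Set (ℝ × ℝ)} (hfin : S.Finite) (hne : S.Nonempty) :
    lmax S ∈ S ∧ ∀ x ∈ S, toLex x ≤ toLex (lmax S) := by
  have h : ∃ m ∈ S, ∀ x ∈ S, toLex x ≤ toLex m :=
    Set.exists_max_image S toLex hfin hne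
  rw [lmax, dif_pos h]
  exact ⟨h.choose_spec.1, h.choose_spec.2⟩

noncomputable def qof (σ : Set (ℝ × ℝ)) (p : ℝ × ℝ) : Set (ℝ × ℝ) :=
  if h : ∃ q, IsQuadrantOf q σ ∧ p ∈ q then h.choose else ∅

lemma qof_spec {σ : Set (ℝ × ℝ)} (hσ : IsCanSq σ) {p : ℝ × ℝ} (hp : p ∈ σ) :
    IsQuadrantOf (qof σ p) σ ∧ p ∈ qof σ p := by
  have h : ∃ q, IsQuadrantOf q σ ∧ p ∈ q := exists_quadrant_mem hσ hp
  rw [qof, dif_pos h]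
  exact h.choose_spec

noncomputable def charge (P σ : Set (ℝ × ℝ)) : ℝ × ℝ :=
  lmax ((P ∩ σ) \ qof σ (lmax (P ∩ σ)))

lemma quadrant_subset {q σ : Set (ℝ × ℝ)} (h : IsQuadrantOf q σ) : q ⊆ σ := h.choose_spec.2.2

/-- All the facts about a critical square we need. -/
lemma charge_spec {P σ : Set (ℝ × ℝ)} (hfin : P.Finite) (hσ : Critical P σ) :
    charge P σ ∈ P ∩ σ ∧ charge P σ ∉ qof σ (lmax (P ∩ σ)) ∧
    lmax (P ∩ σ) ∈ P ∩ σ ∧ (∀ x ∈ P ∩ σ, toLex x ≤ toLex (lmax (P ∩ σ))) ∧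
    IsQuadrantOf (qof σ (lmax (P ∩ σ))) σ ∧ lmax (P ∩ σ) ∈ qof σ (lmax (P ∩ σ)) ∧
    (∀ x ∈ (P ∩ σ) \ qof σ (lmax (P ∩ σ)), toLex x ≤ toLex (charge P σ)) ∧
    toLex (charge P σ) < toLex (lmax (P ∩ σ)) := by
  obtain ⟨hcs, q₁, q₂, hq₁, hq₂, hne, ⟨x₁, hx₁⟩, ⟨x₂, hx₂⟩⟩ := hσ
  have hSfin : (P ∩ σ).Finite := hfin.inter_of_left σ
  have hSne : (P ∩ σ).Nonempty := ⟨x₁, hx₁.1, quadrant_subset hq₁ hx₁.2⟩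
  obtain ⟨hm, hmub⟩ := lmax_spec hSfin hSne
  set m := lmax (P ∩ σ)
  obtain ⟨hquad, hmq⟩ := qof_spec hcs hm.2
  set Q := qof σ m
  -- T nonempty
  have hTne : ((P ∩ σ) \ Q).Nonempty := by
    rcases eq_or_ne q₁ Q with h | h
    · refine ⟨x₂, ⟨hx₂.1, quadrant_subset hq₂ hx₂.2⟩, fun hc => ?_⟩
      exact hne (h.trans (quadrant_unique hquad hq₂ hc hx₂.2) ▸ rfl)
    · refine ⟨x₁, ⟨hx₁.1, quadrant_subset hq₁ hx₁.2⟩, fun hc => ?_⟩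
      exact h (quadrant_unique hq₁ hquad hx₁.2 hc)
  obtain ⟨hc, hcub⟩ := lmax_spec (hSfin.diff (t := Q)) hTne
  have hcP : charge P σ ∈ P ∩ σ := hc.1
  have hcQ : charge P σ ∉ Q := hc.2
  refine ⟨hcP, hcQ, hm, hmub, hquad, hmq, hcub, ?_⟩
  rcases lt_or_eq_of_le (hmub _ hcP) with h | h
  · exact h
  · exact absurd (toLex.injective h ▸ hmq) hcQ

lemma quadrant_disjoint {σ q₁ q₂ : Set (ℝ × ℝ)} (h1 : IsQuadrantOf q₁ σ)
    (h2 : IsQuadrantOf q₂ σ) (hne : q₁ ≠ q₂) {p : ℝ × ℝ} (hp : p ∈ q₁) : p ∉ q₂ :=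
  fun hc => hne (quadrant_unique h1 h2 hp hc)

lemma critical_canSq {P σ : Set (ℝ × ℝ)} (h : Critical P σ) : IsCanSq σ := h.1

/-- Asymmetric key step: if `σ ⊊ τ` are both critical then charges differ. -/
lemma charge_ne {P σ τ : Set (ℝ × ℝ)} (hfin : P.Finite) (hσ : Critical P σ)
    (hτ : Critical P τ) (hsub : σ ⊆ τ) (hne : σ ≠ τ) : charge P σ ≠ charge P τ := by
  obtain ⟨hcσP, hcσQ, hmσ, hmubσ, hquadσ, hmqσ, hcubσ, hltσ⟩ := charge_spec hfin hσ
  obtain ⟨hcτP, hcτQ, hmτ, hmubτ, hquadτ, hmqτ, hcubτ, hltτ⟩ := charge_spec hfin hτ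
  intro heq
  obtain ⟨q, hq, hσq⟩ := subsquare_in_quadrant hσ.1 hτ.1 hsub hne
  rcases eq_or_ne q (qof τ (lmax (P ∩ τ))) with h | h
  · -- charge P τ = charge P σ ∈ σ ⊆ q = qof τ mτ, contradiction
    exact hcτQ (h ▸ hσq (heq ▸ hcσP.2))
  · -- mσ ∈ σ ⊆ q, disjoint from qof τ mτ
    have hmστ : lmax (P ∩ σ) ∈ (P ∩ τ) \ qof τ (lmax (P ∩ τ)) :=
      ⟨⟨hmσ.1, hsub hmσ.2⟩, quadrant_disjoint hq hquadτ h (hσq hmσ.2)⟩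
    have h1 : toLex (lmax (P ∩ σ)) ≤ toLex (charge P τ) := hcubτ _ hmστ
    rw [← heq] at h1
    exact absurd (lt_of_le_of_lt h1 hltσ) (lt_irrefl _)

lemma charge_injOn {P : Set (ℝ × ℝ)} (hfin : P.Finite) :
    Set.InjOn (charge P) {σ | Critical P σ} := by
  intro σ hσ τ hτ heq
  by_contra hne
  -- σ and τ share the point charge P σ
  have hσc := (charge_spec hfin hσ).1
  have hτc := (charge_spec hfin hτ).1
  rw [← heq] at hτc
  -- nested
  obtain ⟨k, i, j, _, _, _, _, hσe⟩ := hσ.1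
  obtain ⟨l, a, b, _, _, _, _, hτe⟩ := hτ.1
  rcases le_total l k with h | h
  · have : σ ⊆ τ := by
      subst hσe hτe
      exact canSq_subset_of_mem_mem h hσc.2 hτc.2
    exact charge_ne hfin hσ hτ this hne heq
  · have : τ ⊆ σ := by
      subst hσe hτe
      exact canSq_subset_of_mem_mem h hτc.2 hσc.2
    exact charge_ne hfin hτ hσ this (Ne.symm hne) heq.symm

lemma crit_card_bound {P : Set (ℝ × ℝ)} (hfin : P.Finite) (hne : P.Nonempty) :
    {σ | Critical P σ}.ncard ≤ P.ncard - 1 ∧ {σ | Critical P σ}.Finite := by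
  obtain ⟨hM, hMub⟩ := lmax_spec hfin hne
  have himg : charge P '' {σ | Critical P σ} ⊆ P \ {lmax P} := by
    rintro _ ⟨σ, hσ, rfl⟩
    obtain ⟨hcP, -, hm, -, -, -, -, hlt⟩ := charge_spec hfin hσ
    refine ⟨hcP.1, fun hc => ?_⟩
    rw [Set.mem_singleton_iff] at hc
    have := hMub _ hm.1
    rw [hc] at hlt
    exact absurd (lt_of_lt_of_le hlt this) (lt_irrefl _)
  have hdfin : (P \ {lmax P}).Finite := hfin.diff
  have hcritfin : {σ | Critical P σ}.Finite :=
    Set.Finite.of_finite_image (hdfin.subset himg) (charge_injOn hfin)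
  constructor
  · calc {σ | Critical P σ}.ncard = (charge P '' {σ | Critical P σ}).ncard :=
          (Set.ncard_image_of_injOn (charge_injOn hfin)).symm
      _ ≤ (P \ {lmax P}).ncard := Set.ncard_le_ncard himg hdfin
      _ = P.ncard - 1 := Set.ncard_diff_singleton_of_mem hM
  · exact hcritfin

noncomputable def sqrep (σ : Set (ℝ × ℝ)) : ℕ × ℤ × ℤ :=
  if h : ∃ p : ℕ × ℤ × ℤ, σ = canSq p.1 p.2.1 p.2.2 then h.choose else (0, 0, 0)

lemma sqrep_eq {k : ℕ} {i j : ℤ} {σ : Set (ℝ × ℝ)} (h : σ = canSq k i j) :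
    sqrep σ = (k, i, j) := by
  have he : ∃ p : ℕ × ℤ × ℤ, σ = canSq p.1 p.2.1 p.2.2 := ⟨(k, i, j), h⟩
  rw [sqrep, dif_pos he]
  have h2 := he.choose_spec
  obtain ⟨h3, h4, h5⟩ := canSq_inj (h2.symm.trans h)
  exact Prod.ext h3 (Prod.ext h4 h5)

noncomputable def tile (P q : Set (ℝ × ℝ)) : Set (ℝ × ℝ) :=
  if (P ∩ q).ncard ≤ 1 then q else q \ smallestCanSq (P ∩ q)

noncomputable def quadT (P : Set (ℝ × ℝ)) (a b : ℤ) (σ : Set (ℝ × ℝ)) : Set (ℝ × ℝ) :=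
  tile P (canSq ((sqrep σ).1 + 1) (2 * (sqrep σ).2.1 + a) (2 * (sqrep σ).2.2 + b))

lemma QT_subset (P : Set (ℝ × ℝ)) :
    QT P ⊆ insert unitSq (insert (unitSq \ smallestCanSq P)
      (quadT P 0 0 '' {σ | Critical P σ} ∪ quadT P 0 1 '' {σ | Critical P σ} ∪
       quadT P 1 0 '' {σ | Critical P σ} ∪ quadT P 1 1 '' {σ | Critical P σ})) := by
  rintro f (⟨-, rfl⟩ | ⟨-, -, rfl⟩ | ⟨σ, q, hσ, hq, hf⟩)
  · exact Set.mem_insert _ _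
  · exact Set.mem_insert_of_mem _ (Set.mem_insert _ _)
  · obtain ⟨k, i, j, hi, hik, hj, hjk, hσe⟩ := hσ.1
    have hrep : sqrep σ = (k, i, j) := sqrep_eq hσe
    rw [hσe] at hq
    obtain ⟨a, b, ha, hb, hqe⟩ := (quadrant_iff hi hik hj hjk).mp hq
    have hft : f = tile P q := by
      rcases hf with ⟨h1, rfl⟩ | ⟨h1, -, rfl⟩
      · rw [tile, if_pos h1]
      · rw [tile, if_neg (by omega)]
    have key : ∀ a' b' : ℤ, a = 2 * i + a' → b = 2 * j + b' →
        f = quadT P a' b' σ := by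
      intro a' b' ha' hb'
      rw [hft, quadT, hrep]
      simp only
      rw [← ha', ← hb', ← hqe]
    refine Set.mem_insert_of_mem _ (Set.mem_insert_of_mem _ ?_)
    rcases ha with rfl | rfl <;> rcases hb with rfl | rfl
    · exact Or.inl (Or.inl (Or.inl ⟨σ, hσ, (key 0 0 (by ring) (by ring)).symm⟩))
    · exact Or.inl (Or.inl (Or.inr ⟨σ, hσ, (key 0 1 (by ring) (by ring)).symm⟩))
    · exact Or.inl (Or.inr ⟨σ, hσ, (key 1 0 (by ring) (by ring)).symm⟩)
    · exact Or.inr ⟨σ, hσ, (key 1 1 (by ring) (by ring)).symm⟩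


/-- Linear size of the compressed quadtree: for `|P| = n ≥ 1`, the number of
canonical squares critical for `P` is at most `n - 1`, and the number of tiles
of `QT(P)` is at most `4n`. -/
theorem QT_linear_size (P : Set (ℝ × ℝ)) (hfin : P.Finite) (hPU : P ⊆ unitSq)
    (n : ℕ) (hn : P.ncard = n) (hn1 : 1 ≤ n) :
    {σ : Set (ℝ × ℝ) | Critical P σ}.ncard ≤ n - 1 ∧ (QT P).ncard ≤ 4 * n := by
  have hPne : P.Nonempty := Set.nonempty_of_ncard_ne_zero (by omega)
  obtain ⟨hb, hcfin⟩ := crit_card_bound hfin hPne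
  rw [hn] at hb
  refine ⟨hb, ?_⟩
  set C := {σ | Critical P σ} with hC
  have hUfin : (quadT P 0 0 '' C ∪ quadT P 0 1 '' C ∪ quadT P 1 0 '' C ∪
      quadT P 1 1 '' C).Finite :=
    (((hcfin.image _).union (hcfin.image _)).union (hcfin.image _)).union (hcfin.image _)
  have hTfin := (hUfin.insert (unitSq \ smallestCanSq P)).insert unitSq
  have h1 : (QT P).ncard ≤ _ := Set.ncard_le_ncard (QT_subset P) hTfin
  rw [← hC] at h1
  have h2 := Set.ncard_insert_le unitSq (insert (unitSq \ smallestCanSq P)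
      (quadT P 0 0 '' C ∪ quadT P 0 1 '' C ∪ quadT P 1 0 '' C ∪ quadT P 1 1 '' C))
  have h3 := Set.ncard_insert_le (unitSq \ smallestCanSq P)
      (quadT P 0 0 '' C ∪ quadT P 0 1 '' C ∪ quadT P 1 0 '' C ∪ quadT P 1 1 '' C)
  have h4 := Set.ncard_union_le (quadT P 0 0 '' C ∪ quadT P 0 1 '' C ∪ quadT P 1 0 '' C)
      (quadT P 1 1 '' C)
  have h5 := Set.ncard_union_le (quadT P 0 0 '' C ∪ quadT P 0 1 '' C) (quadT P 1 0 '' C)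
  have h6 := Set.ncard_union_le (quadT P 0 0 '' C) (quadT P 0 1 '' C)
  have i1 := Set.ncard_image_le (f := quadT P 0 0) hcfin
  have i2 := Set.ncard_image_le (f := quadT P 0 1) hcfin
  have i3 := Set.ncard_image_le (f := quadT P 1 0) hcfin
  have i4 := Set.ncard_image_le (f := quadT P 1 1) hcfin
  omega
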